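/- For every d ∈ (0,2) and every integer r ≥ 1, ((1·3·5⋯(2r−1))/(2r)!) · ∫_ℝ x^{2r} e^{−x²/2} · C_d/|x|^{1+d} dx = d·(2−d)·(4−d)⋯(2r−2−d)/(2^r · r!), where C_d = d·2^{d/2−1}/Γ(1−d/2). -/

import Mathlib

open MeasureTheory Real

lemma gamma_shift_aux (s : ℝ) (hs : 0 < s) :
    ∀ n : ℕ, Real.Gamma (s + n) = Real.Gamma s * ∏ i ∈ Finset.range n, (s + i) := by
  intro n
  induction n with
  | zero => simp
  | succ n ih =>
    have h1 : s + (n + 1 : ℕ) = (s + n) + 1 := by push_cast; ring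
    have h2 : s + (n : ℝ) ≠ 0 := by positivity
    rw [h1, Real.Gamma_add_one h2, ih, Finset.prod_range_succ]
    ring

lemma fact_two_mul_eq (r : ℕ) :
    ((Nat.factorial (2 * r) : ℝ)) =
      (∏ i ∈ Finset.range r, (2 * (i : ℝ) + 1)) * (2 ^ r * (Nat.factorial r : ℝ)) := by
  induction r with
  | zero => simp
  | succ r ih =>
    have h : 2 * (r + 1) = 2 * r + 1 + 1 := by ring
    rw [h, Nat.factorial_succ, Nat.factorial_succ, Nat.factorial_succ, Finset.prod_range_succ]
    push_cast
    rw [ih]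
    ring

/-- For `0 < d < 2` and `r ≥ 1`,
`(1·3·5⋯(2r-1))/(2r)! · ∫ x^{2r} e^{-x²/2} C_d/|x|^{1+d} dx = d(2-d)(4-d)⋯(2r-2-d)/(2^r r!)`. -/
theorem inverse_power_zeta_coefficient (d : ℝ) (hd : d ∈ Set.Ioo (0 : ℝ) 2)
    (r : ℕ) (hr : 1 ≤ r) :
    (∏ i ∈ Finset.range r, (2 * (i : ℝ) + 1)) / (Nat.factorial (2 * r) : ℝ) *
      ∫ x : ℝ, x ^ (2 * r) * Real.exp (-x ^ 2 / 2) *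
        (d * 2 ^ (d / 2 - 1) / Real.Gamma (1 - d / 2) / |x| ^ (1 + d)) =
    (d * ∏ i ∈ Finset.range (r - 1), (2 * ((i : ℝ) + 1) - d)) /
      (2 ^ r * (Nat.factorial r : ℝ)) := by
  obtain ⟨hd0, hd2⟩ := hd
  set C : ℝ := d * 2 ^ (d / 2 - 1) / Real.Gamma (1 - d / 2) with hC
  set q : ℝ := 2 * r - (1 + d) with hq
  have hq1 : -1 < q := by
    have : (1 : ℝ) ≤ r := by exact_mod_cast hr
    simp only [hq]; linarith
  -- Step 1: rewrite the integrand a.e. as C * |x|^q * exp(-x²/2)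
  have step1 : (∫ x : ℝ, x ^ (2 * r) * Real.exp (-x ^ 2 / 2) * (C / |x| ^ (1 + d)))
      = ∫ x : ℝ, C * (|x| ^ q * Real.exp (-x ^ 2 / 2)) := by
    refine integral_congr_ae ?_
    filter_upwards [compl_mem_ae_iff.mpr (Real.volume_singleton (a := (0:ℝ)))] with x hx
    have hx0 : x ≠ 0 := hx
    have hax : (0 : ℝ) < |x| := abs_pos.mpr hx0
    have h1 : x ^ (2 * r) = |x| ^ ((2 * r : ℕ) : ℝ) := by
      rw [Real.rpow_natCast, ← abs_pow, abs_of_nonneg (even_two_mul r |>.pow_nonneg x)]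
    have h3 : |x| ^ ((2 * r : ℕ) : ℝ) / |x| ^ (1 + d) = |x| ^ q := by
      rw [← Real.rpow_sub hax]
      congr 1
      push_cast [hq]; ring
    rw [h1, ← h3]
    ring
  -- Step 2: reduce to an integral over (0, ∞)
  have step2 : (∫ x : ℝ, C * (|x| ^ q * Real.exp (-x ^ 2 / 2)))
      = 2 * ∫ x in Set.Ioi (0 : ℝ), C * (x ^ q * Real.exp (-x ^ 2 / 2)) := by
    have h := integral_comp_abs (f := fun y => C * (y ^ q * Real.exp (-y ^ 2 / 2)))
    simp only [sq_abs] at h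
    exact h
  -- Step 3: evaluate the half-line integral
  have step3 : (∫ x in Set.Ioi (0 : ℝ), C * (x ^ q * Real.exp (-x ^ 2 / 2)))
      = C * ((1/2 : ℝ) ^ (-(q + 1) / 2) * (1 / 2) * Real.Gamma ((q + 1) / 2)) := by
    rw [integral_const_mul]
    congr 1
    rw [← integral_rpow_mul_exp_neg_mul_rpow (p := 2) (b := 1/2) two_pos hq1 (by norm_num)]
    refine setIntegral_congr_fun measurableSet_Ioi (fun x hx => ?_)
    rw [Real.rpow_two]
    congr 1
    ring
  rw [step1, step2, step3]
  -- Step 4: algebra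
  have hGpos : 0 < Real.Gamma (1 - d / 2) := Real.Gamma_pos_of_pos (by linarith)
  have hGamma : Real.Gamma ((q + 1) / 2)
      = Real.Gamma (1 - d / 2) * ∏ i ∈ Finset.range (r - 1), (1 - d / 2 + i) := by
    have h : (q + 1) / 2 = (1 - d / 2) + ((r - 1 : ℕ) : ℝ) := by
      have hcast : ((r - 1 : ℕ) : ℝ) = (r : ℝ) - 1 := by
        push_cast [Nat.cast_sub hr]; ring
      rw [hcast, hq]; ring
    rw [h, gamma_shift_aux _ (by linarith)]
  rw [hGamma]
  have hhalf : (1/2 : ℝ) ^ (-(q + 1) / 2) = 2 ^ ((q + 1) / 2) := by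
    rw [one_div, Real.inv_rpow (by norm_num), ← Real.rpow_neg (by norm_num)]
    congr 1
    ring
  rw [hhalf]
  have hpow : (2 : ℝ) ^ (d / 2 - 1) * 2 ^ ((q + 1) / 2) = 2 ^ ((r : ℝ) - 1) := by
    rw [← Real.rpow_add two_pos]
    congr 1
    rw [hq]; ring
  have key : C * (2 ^ ((q + 1) / 2) * (1 / 2) *
        (Real.Gamma (1 - d / 2) * ∏ i ∈ Finset.range (r - 1), (1 - d / 2 + i)))
      = d * 2 ^ ((r : ℝ) - 1) * (1 / 2) * ∏ i ∈ Finset.range (r - 1), (1 - d / 2 + i) := by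
    rw [hC, ← hpow]
    have hG := hGpos.ne'
    calc d * 2 ^ (d / 2 - 1) / Real.Gamma (1 - d / 2) * (2 ^ ((q + 1) / 2) * (1 / 2) *
            (Real.Gamma (1 - d / 2) * ∏ i ∈ Finset.range (r - 1), (1 - d / 2 + i)))
        = d * (2 ^ (d / 2 - 1) * 2 ^ ((q + 1) / 2)) * (1 / 2) *
            (∏ i ∈ Finset.range (r - 1), (1 - d / 2 + i)) *
            (Real.Gamma (1 - d / 2) / Real.Gamma (1 - d / 2)) := by ring
      _ = d * (2 ^ (d / 2 - 1) * 2 ^ ((q + 1) / 2)) * (1 / 2) *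
            ∏ i ∈ Finset.range (r - 1), (1 - d / 2 + i) := by rw [div_self hG, mul_one]
  rw [key]
  have hpow2 : (2 : ℝ) ^ ((r : ℝ) - 1) = 2 ^ (r - 1 : ℕ) := by
    rw [← Real.rpow_natCast 2 (r - 1)]
    congr 1
    push_cast [Nat.cast_sub hr]; ring
  rw [hpow2]
  have hprod : (∏ i ∈ Finset.range (r - 1), (2 * ((i : ℝ) + 1) - d))
      = 2 ^ (r - 1 : ℕ) * ∏ i ∈ Finset.range (r - 1), (1 - d / 2 + i) := by
    rw [show (2 : ℝ) ^ (r - 1 : ℕ) = ∏ _i ∈ Finset.range (r - 1), (2 : ℝ) by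
      rw [Finset.prod_const, Finset.card_range], ← Finset.prod_mul_distrib]
    exact Finset.prod_congr rfl (fun i _ => by ring)
  rw [hprod, fact_two_mul_eq r]
  have h2r : (2 : ℝ) ^ r = 2 ^ (r - 1 : ℕ) * 2 := by
    rw [← pow_succ]
    congr 1
    omega
  rw [h2r]
  have hP_pos : (0 : ℝ) < ∏ i ∈ Finset.range r, (2 * (i : ℝ) + 1) :=
    Finset.prod_pos (fun i _ => by positivity)
  have hrfact_pos : (0 : ℝ) < (Nat.factorial r : ℝ) := by
    exact_mod_cast Nat.factorial_pos r
  field_simp
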